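/- Let X be a complex separable infinite-dimensional Banach space and let T be a bounded linear operator on X. Suppose there exists a sequence (u_n)_{n≥1} of nonzero vectors in X and a sequence (λ_n)_{n≥1} of complex numbers such that: (i) T u_n = λ_n u_n with |λ_n| = 1 for all n, and the λ_n are pairwise distinct; (ii) the linear span of {u_n : n ≥ 1} is dense in X; (iii) for every n ≥ 1 and every ε > 0 there exists m ≠ n with ‖u_n − u_m‖ < ε. Then T is hypercyclic. -/

import Mathlib

open MeasureTheory

namespace GrivauxAux

open scoped Real


open scoped Real

/-- If `x` is at distance at least `c` from every integer, then `exp(2πix)` is far from `1`. -/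
lemma far_of_forall_int {x c : ℝ} (h : ∀ m : ℤ, c ≤ |x - m|) :
    4 * c ≤ ‖Complex.exp ((2 * π * x : ℝ) * Complex.I) - 1‖ := by
  have h1 : ‖Complex.exp ((2 * π * x : ℝ) * Complex.I)‖ = 1 := Complex.norm_exp_ofReal_mul_I _
  have h2 := Complex.mul_angle_le_norm_sub (x := Complex.exp ((2 * π * x : ℝ) * Complex.I))
    (y := 1) h1 norm_one
  have h3 := Complex.angle_exp_one (2 * π * x)
  set z : ℤ := toIocDiv Real.two_pi_pos (-π) (2 * π * x) with hz
  have h4 : toIocMod Real.two_pi_pos (-π) (2 * π * x) = 2 * π * x - z • (2 * π) := rfl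
  have h5 : |toIocMod Real.two_pi_pos (-π) (2 * π * x)| = 2 * π * |x - z| := by
    rw [h4, zsmul_eq_mul]
    have : 2 * π * x - (z : ℝ) * (2 * π) = (2 * π) * (x - z) := by ring
    rw [this, abs_mul, abs_of_pos Real.two_pi_pos]
  have h6 : c ≤ |x - (z : ℝ)| := h z
  have hπ : 0 < π := Real.pi_pos
  rw [h3, h5] at h2
  calc 4 * c = 2 / π * (2 * π * c) := by field_simp; ring
    _ ≤ 2 / π * (2 * π * |x - (z:ℝ)|) := by gcongr <;> positivity
    _ ≤ ‖Complex.exp ((2 * π * x : ℝ) * Complex.I) - 1‖ := h2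
    _ = ‖_‖ := rfl

/-- For a unimodular `ν`, the argument is controlled by the distance to `1`. -/
lemma abs_arg_le_of_abs_one {ν : ℂ} (h : ‖ν‖ = 1) :
    |ν.arg| ≤ π / 2 * ‖ν - 1‖ := by
  have hν0 : ν ≠ 0 := by
    intro h0; rw [h0] at h; simp at h
  have h1 : ‖ν‖ = 1 := h
  have := Complex.angle_le_mul_norm_sub (x := ν) (y := 1) h1 norm_one
  rwa [Complex.angle_one_right hν0] at this



open scoped Real

lemma exists_good_k (S : Finset ℕ) (hS : S.Nonempty) (w : ℕ → ℝ)
    (hw0 : ∀ n ∈ S, w n ≠ 0) (hwb : ∀ n ∈ S, |w n| ≤ 1 / (16 * S.card)) :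
    ∃ k : ℕ, 1 ≤ k ∧ ∀ n ∈ S, ∀ m : ℤ, 1 / (32 * S.card) ≤ |(k : ℝ) * w n - m| := by
  have hs1 : (1 : ℝ) ≤ (S.card : ℝ) := by exact_mod_cast hS.card_pos
  set s : ℝ := (S.card : ℝ) with hs_def
  have hs0 : 0 < s := lt_of_lt_of_le one_pos hs1
  set c : ℝ := 1 / (16 * s) with hc_def
  have hc : 0 < c := by positivity
  have hc1 : c ≤ 1 := by
    rw [hc_def, div_le_one (by positivity)]
    nlinarith
  have hwpos : ∀ n ∈ S, 0 < |w n| := fun n hn => abs_pos.mpr (hw0 n hn)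
  have hwbc : ∀ n ∈ S, |w n| ≤ c := by
    intro n hn
    rw [hc_def]
    exact hwb n hn
  set W : ℝ := ∑ n ∈ S, 1 / |w n| with hW_def
  have hW : 0 < W := Finset.sum_pos (fun n hn => by
    have := hwpos n hn; positivity) hS
  set T : ℝ := 2 + 14 * c * W with hT_def
  have hT2 : 2 ≤ T := by
    rw [hT_def]
    nlinarith [mul_pos hc hW]
  have hT0 : 0 < T := lt_of_lt_of_le two_pos hT2
  set M : ℕ → ℕ := fun n => ⌈T * |w n|⌉₊ + 1 with hM_def
  have hMle : ∀ n ∈ S, (M n : ℝ) ≤ T * |w n| + 2 := by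
    intro n hn
    have h1 : (⌈T * |w n|⌉₊ : ℝ) < T * |w n| + 1 :=
      Nat.ceil_lt_add_one (mul_nonneg hT0.le (abs_nonneg _))
    have h2 : (M n : ℝ) = (⌈T * |w n|⌉₊ : ℝ) + 1 := by rw [hM_def]; push_cast; ring
    linarith
  have hMge : ∀ n ∈ S, T * |w n| + 1 ≤ (M n : ℝ) := by
    intro n hn
    have h1 : T * |w n| ≤ (⌈T * |w n|⌉₊ : ℝ) := Nat.le_ceil _
    have h2 : (M n : ℝ) = (⌈T * |w n|⌉₊ : ℝ) + 1 := by rw [hM_def]; push_cast; ring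
    linarith
  set U : Set ℝ := ⋃ n ∈ S, ⋃ m ∈ Finset.Icc (-(M n : ℤ)) ((M n : ℤ)),
      Metric.ball ((m : ℝ) / w n) (c / |w n|) with hU_def
  clear_value s c W T M U
  -- volume estimate
  have hvol : volume U < volume (Set.Icc (1 : ℝ) T) := by
    rw [Real.volume_Icc, hU_def]
    have hnn2 : ∀ n : ℕ, (0:ℝ) ≤ 2 * (c / |w n|) :=
      fun n => mul_nonneg two_pos.le (div_nonneg hc.le (abs_nonneg _))
    have step1 : volume (⋃ n ∈ S, ⋃ m ∈ Finset.Icc (-(M n : ℤ)) ((M n : ℤ)),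
        Metric.ball ((m : ℝ) / w n) (c / |w n|))
        ≤ ∑ n ∈ S, ENNReal.ofReal ((2 * (M n : ℝ) + 1) * (2 * (c / |w n|))) := by
      refine le_trans (measure_biUnion_finset_le S _) (Finset.sum_le_sum ?_)
      intro n hn
      refine le_trans (measure_biUnion_finset_le _ _) (le_of_eq ?_)
      have hcard : (Finset.Icc (-(M n : ℤ)) ((M n : ℤ))).card = 2 * M n + 1 := by
        rw [Int.card_Icc]
        omega
      calc ∑ m ∈ Finset.Icc (-(M n : ℤ)) ((M n : ℤ)),
            volume (Metric.ball ((m : ℝ) / w n) (c / |w n|))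
          = ∑ m ∈ Finset.Icc (-(M n : ℤ)) ((M n : ℤ)), ENNReal.ofReal (2 * (c / |w n|)) := by
            simp [Real.volume_ball]
        _ = (2 * M n + 1) • ENNReal.ofReal (2 * (c / |w n|)) := by
            rw [Finset.sum_const, hcard]
        _ = ENNReal.ofReal ((2 * (M n : ℝ) + 1) * (2 * (c / |w n|))) := by
            rw [nsmul_eq_mul, ← ENNReal.ofReal_natCast, ← ENNReal.ofReal_mul (by positivity)]
            congr 1
            push_cast
            ring
    have hterm_nn : ∀ n ∈ S, (0:ℝ) ≤ (2 * (M n : ℝ) + 1) * (2 * (c / |w n|)) := by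
      intro n hn
      exact mul_nonneg (by have := Nat.cast_nonneg (α := ℝ) (M n); linarith) (hnn2 n)
    have step2 : ∑ n ∈ S, ENNReal.ofReal ((2 * (M n : ℝ) + 1) * (2 * (c / |w n|)))
        = ENNReal.ofReal (∑ n ∈ S, (2 * (M n : ℝ) + 1) * (2 * (c / |w n|))) := by
      rw [ENNReal.ofReal_sum_of_nonneg hterm_nn]
    have hreal : ∑ n ∈ S, (2 * (M n : ℝ) + 1) * (2 * (c / |w n|)) < T - 1 := by
      have hterm : ∀ n ∈ S, (2 * (M n : ℝ) + 1) * (2 * (c / |w n|))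
          ≤ 4 * c * T + 10 * c * (1 / |w n|) := by
        intro n hn
        have h1 := hMle n hn
        have h2 := hwpos n hn
        have key : (2 * (M n : ℝ) + 1) ≤ 2 * T * |w n| + 5 := by linarith
        calc (2 * (M n : ℝ) + 1) * (2 * (c / |w n|))
            ≤ (2 * T * |w n| + 5) * (2 * (c / |w n|)) := by
              exact mul_le_mul_of_nonneg_right key (hnn2 n)
          _ = 4 * c * T + 10 * c * (1 / |w n|) := by
              field_simp
              ring
      calc ∑ n ∈ S, (2 * (M n : ℝ) + 1) * (2 * (c / |w n|))
          ≤ ∑ n ∈ S, (4 * c * T + 10 * c * (1 / |w n|)) := Finset.sum_le_sum hterm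
        _ = 4 * c * T * s + 10 * c * W := by
            rw [Finset.sum_add_distrib, Finset.sum_const, ← Finset.mul_sum, ← hW_def, hs_def]
            push_cast
            ring
        _ < T - 1 := by
            have hcs : c * s = 1 / 16 := by
              rw [hc_def]
              field_simp
              try ring
            have hcW : 0 < c * W := mul_pos hc hW
            nlinarith [hT_def]
    calc volume (⋃ n ∈ S, ⋃ m ∈ Finset.Icc (-(M n : ℤ)) ((M n : ℤ)),
            Metric.ball ((m : ℝ) / w n) (c / |w n|))
        ≤ ENNReal.ofReal (∑ n ∈ S, (2 * (M n : ℝ) + 1) * (2 * (c / |w n|))) := by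
          rw [← step2]; exact step1
      _ < ENNReal.ofReal (T - 1) := by
          refine (ENNReal.ofReal_lt_ofReal_iff_of_nonneg ?_).mpr hreal
          exact Finset.sum_nonneg hterm_nn
  have hne : ¬(Set.Icc (1 : ℝ) T ⊆ U) := fun h => absurd (measure_mono h) (not_le.mpr hvol)
  obtain ⟨t, htI, htU⟩ := Set.not_subset.mp hne
  obtain ⟨ht1, htT⟩ := htI
  -- t is far from all the dangerous rationals
  have hfar : ∀ n ∈ S, ∀ m : ℤ, c ≤ |t * w n - m| := by
    intro n hn m
    by_contra hcon
    push_neg at hcon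
    apply htU
    rw [hU_def]
    have h2 := hwpos n hn
    have hmM : m ∈ Finset.Icc (-(M n : ℤ)) ((M n : ℤ)) := by
      have e1 : |(m : ℝ)| ≤ |t * w n| + |t * w n - m| := by
        have h := abs_add_le (t * w n) (-(t * w n - (m : ℝ)))
        rw [abs_neg] at h
        calc |(m : ℝ)| = |t * w n + -(t * w n - m)| := by congr 1; ring
          _ ≤ |t * w n| + |t * w n - m| := h
      have e2 : |t * w n| ≤ T * |w n| := by
        rw [abs_mul, abs_of_nonneg (by linarith : (0:ℝ) ≤ t)]
        have hwn : 0 ≤ |w n| := abs_nonneg _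
        nlinarith
      have h1 : |(m : ℝ)| ≤ T * |w n| + 1 := by
        have := le_of_lt hcon
        linarith
      have h2' : |(m : ℝ)| ≤ (M n : ℝ) := by
        have := hMge n hn
        linarith
      have h3 : |m| ≤ (M n : ℤ) := by exact_mod_cast h2'
      rw [Finset.mem_Icc]
      exact abs_le.mp h3
    refine Set.mem_biUnion hn (Set.mem_biUnion hmM ?_)
    rw [Metric.mem_ball, Real.dist_eq]
    have hrw : t - (m : ℝ) / w n = (t * w n - m) / w n := by
      rw [eq_div_iff (hw0 n hn), sub_mul, div_mul_cancel₀ _ (hw0 n hn)]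
    rw [hrw, abs_div]
    exact (div_lt_div_iff_of_pos_right h2).mpr hcon
  -- now round t
  have hroundabs : |t - round t| ≤ 1 / 2 := abs_sub_round t
  have hr0 : 0 < round t := by
    have h' : (0 : ℝ) < (round t : ℝ) := by
      obtain ⟨hlo, hhi⟩ := abs_le.mp hroundabs
      linarith
    exact_mod_cast h'
  refine ⟨(round t).toNat, by omega, ?_⟩
  intro n hn m
  have h5 : (((round t).toNat : ℕ) : ℤ) = round t := Int.toNat_of_nonneg (by omega)
  have hcast : (((round t).toNat : ℕ) : ℝ) = ((round t : ℤ) : ℝ) := by exact_mod_cast h5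
  rw [hcast]
  have h2 := hwpos n hn
  have hwc := hwbc n hn
  have tri : |t * w n - m| ≤ |t * w n - (round t : ℝ) * w n| + |(round t : ℝ) * w n - m| := by
    have h := abs_add_le (t * w n - (round t : ℝ) * w n) ((round t : ℝ) * w n - m)
    calc |t * w n - (m : ℝ)|
        = |(t * w n - (round t : ℝ) * w n) + ((round t : ℝ) * w n - m)| := by congr 1; ring
      _ ≤ _ := h
  have hstep : |t * w n - (round t : ℝ) * w n| ≤ (1/2) * |w n| := by
    rw [← sub_mul, abs_mul]
    exact mul_le_mul_of_nonneg_right hroundabs (abs_nonneg _)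
  have hfarm := hfar n hn m
  have hfin : c / 2 ≤ |(round t : ℝ) * w n - m| := by nlinarith
  calc 1 / (32 * s) = c / 2 := by rw [hc_def]; ring
    _ ≤ |(round t : ℝ) * w n - m| := hfin


end GrivauxAux


open GrivauxAux
open scoped Real
set_option maxHeartbeats 2000000


/-- Grivaux's criterion: if a bounded operator on a complex separable
infinite-dimensional Banach space has a sequence of eigenvectors with pairwise distinct
unimodular eigenvalues, whose span is dense, and such that each eigenvector can be
approximated arbitrarily well by other eigenvectors of the family, then `T` is hypercyclic. -/
theorem hypercyclic_of_unimodular_eigenvectors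
    {X : Type*} [NormedAddCommGroup X] [NormedSpace ℂ X] [CompleteSpace X]
    [TopologicalSpace.SeparableSpace X] (hX : ¬ FiniteDimensional ℂ X)
    (T : X →L[ℂ] X) (u : ℕ → X) (lam : ℕ → ℂ)
    (hu : ∀ n, u n ≠ 0)
    (heig : ∀ n, T (u n) = lam n • u n)
    (hmod : ∀ n, ‖lam n‖ = 1)
    (hdist : Function.Injective lam)
    (hspan : Dense (Submodule.span ℂ (Set.range u) : Set X))
    (happrox : ∀ n : ℕ, ∀ ε > (0 : ℝ), ∃ m, m ≠ n ∧ ‖u n - u m‖ < ε) :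
    ∃ f : X, Dense (Set.range fun n : ℕ => (T ^ n) f) := by
  classical
  have hπ := Real.pi_pos
  have hlam0 : ∀ n, lam n ≠ 0 := by
    intro n h
    have h1 := hmod n
    rw [h, norm_zero] at h1
    norm_num at h1
  have hTpow : ∀ (n : ℕ) (k : ℕ), (T ^ k) (u n) = (lam n) ^ k • u n := by
    intro n k
    induction k with
    | zero => simp
    | succ k ih =>
      rw [pow_succ, ContinuousLinearMap.mul_apply, heig, ContinuousLinearMap.map_smul, ih, smul_smul, ← pow_succ']
  -- partners with close eigenvalues
  have hpart : ∀ (n : ℕ) (η : ℝ), 0 < η → ∃ m, lam m ≠ lam n ∧ ‖u n - u m‖ < η ∧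
      ‖lam m - lam n‖ ≤ 2 * (‖T‖ + 1) / ‖u n‖ * η := by
    intro n η hη
    have hun : 0 < ‖u n‖ := norm_pos_iff.mpr (hu n)
    set ρ := min η (‖u n‖ / 2) with hρ_def
    have hρ : 0 < ρ := lt_min hη (by positivity)
    obtain ⟨m, hmne, hmnorm⟩ := happrox n ρ hρ
    refine ⟨m, fun hl => hmne (hdist hl), lt_of_lt_of_le hmnorm (min_le_left _ _), ?_⟩
    have hkey : (lam m - lam n) • u m = T (u m - u n) - lam n • (u m - u n) := by
      rw [map_sub, heig, heig, sub_smul, smul_sub]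
      abel
    have h1 : ‖lam m - lam n‖ * ‖u m‖ ≤ (‖T‖ + 1) * ‖u m - u n‖ := by
      have e1 : ‖(lam m - lam n) • u m‖ = ‖lam m - lam n‖ * ‖u m‖ := by
        rw [norm_smul]
      rw [← e1, hkey]
      calc ‖T (u m - u n) - lam n • (u m - u n)‖
          ≤ ‖T (u m - u n)‖ + ‖lam n • (u m - u n)‖ := norm_sub_le _ _
        _ ≤ ‖T‖ * ‖u m - u n‖ + 1 * ‖u m - u n‖ := by
            gcongr
            · exact T.le_opNorm _
            · rw [norm_smul, hmod n]
        _ = (‖T‖ + 1) * ‖u m - u n‖ := by ring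
    have hum : ‖u n‖ / 2 ≤ ‖u m‖ := by
      have h2 : ‖u n‖ - ‖u m‖ ≤ ‖u n - u m‖ := norm_sub_norm_le _ _
      have hρ2 : ρ ≤ ‖u n‖ / 2 := min_le_right _ _
      linarith
    have hmn' : ‖u m - u n‖ < ρ := by rwa [norm_sub_rev]
    have hTnn : 0 ≤ ‖T‖ := norm_nonneg _
    have habs_nn : 0 ≤ ‖lam m - lam n‖ := norm_nonneg _
    have h3 : ‖lam m - lam n‖ * (‖u n‖ / 2) ≤ (‖T‖ + 1) * ρ := by
      nlinarith
    have hρη : ρ ≤ η := min_le_left _ _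
    rw [div_mul_eq_mul_div, le_div_iff₀ hun]
    nlinarith
  -- the key approximation lemma
  have key : ∀ x ∈ Submodule.span ℂ (Set.range u), ∀ y ∈ Submodule.span ℂ (Set.range u),
      ∀ ε : ℝ, 0 < ε → ∃ (z : X) (k : ℕ), ‖z - x‖ < ε ∧ ‖(T ^ k) z - y‖ < ε := by
    intro x hx y hy ε hε
    obtain ⟨a, hax⟩ := Finsupp.mem_span_range_iff_exists_finsupp.mp hx
    obtain ⟨b, hby⟩ := Finsupp.mem_span_range_iff_exists_finsupp.mp hy
    set S : Finset ℕ := a.support ∪ b.support with hS_def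
    have hx_repr : x = ∑ n ∈ S, a n • u n := by
      rw [← hax]
      exact Finsupp.sum_of_support_subset a Finset.subset_union_left _
        (fun i _ => zero_smul ℂ (u i))
    have hy_repr : y = ∑ n ∈ S, b n • u n := by
      rw [← hby]
      exact Finsupp.sum_of_support_subset b Finset.subset_union_right _
        (fun i _ => zero_smul ℂ (u i))
    rcases S.eq_empty_or_nonempty with hSe | hSne
    · have hx0 : x = 0 := by rw [hx_repr, hSe]; simp
      have hy0 : y = 0 := by rw [hy_repr, hSe]; simp
      exact ⟨0, 1, by simpa [hx0] using hε, by simpa [hy0] using hε⟩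
    have hs1 : 1 ≤ S.card := hSne.card_pos
    set s : ℝ := (S.card : ℝ) with hs_def
    have hs0 : (0 : ℝ) < s := by
      rw [hs_def]
      exact_mod_cast hs1
    set c2 : ℝ := 1 / (8 * s) with hc2_def
    have hc2 : 0 < c2 := by positivity
    set A : ℝ := ∑ n ∈ S, (‖a n‖ + ‖b n‖) with hA_def
    have hA0 : 0 ≤ A := Finset.sum_nonneg (fun n hn => by positivity)
    set η : ℕ → ℝ := fun n =>
      min ((1 / (4 * s)) / (2 * (‖T‖ + 1) / ‖u n‖)) (ε * c2 / (A + 1)) with hη_def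
    have hηpos : ∀ n, 0 < η n := by
      intro n
      have hun : 0 < ‖u n‖ := norm_pos_iff.mpr (hu n)
      have hT1 : (0:ℝ) < ‖T‖ + 1 := by positivity
      refine lt_min (by positivity) (by positivity)
    choose pm hpm1 hpm2 hpm3 using fun n => hpart n (η n) (hηpos n)
    set ν : ℕ → ℂ := fun n => lam (pm n) / lam n with hν_def
    have hνabs : ∀ n, ‖ν n‖ = 1 := by
      intro n
      simp only [hν_def]
      rw [norm_div, hmod, hmod, div_one]
    have hν1 : ∀ n, ν n ≠ 1 := by
      intro n h1
      exact hpm1 n ((div_eq_one_iff_eq (hlam0 n)).mp h1)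
    have hexp : ∀ n, Complex.exp (((ν n).arg : ℂ) * Complex.I) = ν n := by
      intro n
      have h := Complex.norm_mul_exp_arg_mul_I (ν n)
      rw [hνabs n] at h
      simpa using h
    have harg_ne : ∀ n, (ν n).arg ≠ 0 := by
      intro n h0
      apply hν1 n
      have h := hexp n
      rw [h0] at h
      simpa using h.symm
    set w : ℕ → ℝ := fun n => (ν n).arg / (2 * π) with hw_def
    have hw0 : ∀ n ∈ S, w n ≠ 0 := by
      intro n hn h0
      rw [hw_def] at h0
      exact harg_ne n (by
        field_simp at h0
        simpa using h0)
    have hwb : ∀ n ∈ S, |w n| ≤ 1 / (16 * S.card) := by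
      intro n hn
      have h1 : ‖ν n - 1‖ = ‖lam (pm n) - lam n‖ := by
        simp only [hν_def]
        have hq : lam (pm n) / lam n - 1 = (lam (pm n) - lam n) / lam n := by
          rw [eq_div_iff (hlam0 n), sub_mul, div_mul_cancel₀ _ (hlam0 n), one_mul]
        rw [hq, norm_div, hmod n, div_one]
      have h2 := abs_arg_le_of_abs_one (hνabs n)
      have hun : 0 < ‖u n‖ := norm_pos_iff.mpr (hu n)
      have hT1 : (0:ℝ) < 2 * (‖T‖ + 1) / ‖u n‖ := by positivity
      have h3 : ‖lam (pm n) - lam n‖ ≤ 1 / (4 * s) := by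
        have h5 : η n ≤ (1 / (4 * s)) / (2 * (‖T‖ + 1) / ‖u n‖) := min_le_left _ _
        calc ‖lam (pm n) - lam n‖
            ≤ 2 * (‖T‖ + 1) / ‖u n‖ * η n := hpm3 n
          _ ≤ 2 * (‖T‖ + 1) / ‖u n‖ * ((1 / (4 * s)) / (2 * (‖T‖ + 1) / ‖u n‖)) := by
              gcongr
          _ = 1 / (4 * s) := by
              rw [mul_div_assoc']
              exact mul_div_cancel_left₀ _ (ne_of_gt hT1)
      have h7 : |(ν n).arg| ≤ π / 2 * (1 / (4 * s)) := by
        rw [h1] at h2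
        nlinarith
      have h6 : |w n| = |(ν n).arg| / (2 * π) := by
        rw [hw_def, abs_div, abs_of_pos (by positivity : (0:ℝ) < 2 * π)]
      rw [← hs_def, h6]
      calc |(ν n).arg| / (2 * π) ≤ (π / 2 * (1 / (4 * s))) / (2 * π) := by gcongr
        _ = 1 / (16 * s) := by
            field_simp
            ring
    -- find the good power k
    obtain ⟨k, hk1, hkfar⟩ := exists_good_k S hSne w hw0 hwb
    -- the eigenvalue ratios at time k are far from 1
    have hfar1 : ∀ n ∈ S, c2 ≤ ‖(ν n) ^ k - 1‖ := by
      intro n hn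
      have hx := far_of_forall_int (hkfar n hn)
      have hconst : 4 * (1 / (32 * (S.card : ℝ))) = c2 := by
        rw [hc2_def, hs_def]
        ring
      have hrwexp : Complex.exp (((2 * π * ((k : ℝ) * w n) : ℝ) : ℂ) * Complex.I)
          = (ν n) ^ k := by
        have e1 : (2 * π * ((k : ℝ) * w n)) = (k : ℝ) * (ν n).arg := by
          rw [hw_def]
          field_simp
          try ring
        rw [e1]
        have e2 : (((k : ℝ) * (ν n).arg : ℝ) : ℂ) * Complex.I
            = (k : ℂ) * (((ν n).arg : ℂ) * Complex.I) := by
          push_cast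
          ring
        rw [e2, Complex.exp_nat_mul, hexp n]
      rw [hrwexp] at hx
      rw [← hconst]
      exact hx
    -- denominators
    have hden : ∀ n ∈ S, c2 ≤ ‖(lam (pm n)) ^ k - (lam n) ^ k‖ := by
      intro n hn
      have e1 : (lam (pm n)) ^ k - (lam n) ^ k = (lam n) ^ k * ((ν n) ^ k - 1) := by
        simp only [hν_def]
        rw [div_pow, mul_sub, mul_one, mul_div_assoc']
        rw [mul_div_cancel_left₀ _ (pow_ne_zero k (hlam0 n))]
      rw [e1, norm_mul, norm_pow, hmod n, one_pow, one_mul]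
      exact hfar1 n hn
    have hdenne : ∀ n ∈ S, (lam (pm n)) ^ k - (lam n) ^ k ≠ 0 := by
      intro n hn h0
      have := hden n hn
      rw [h0] at this
      simp at this
      linarith
    set B : ℕ → ℂ := fun n => (b n - a n * (lam n) ^ k) / ((lam (pm n)) ^ k - (lam n) ^ k)
      with hB_def
    have hBle : ∀ n ∈ S, ‖B n‖
        ≤ (‖a n‖ + ‖b n‖) / c2 := by
      intro n hn
      rw [hB_def]
      simp only [norm_div]
      refine div_le_div₀ (by positivity) ?_ hc2 (hden n hn)
      calc ‖b n - a n * (lam n) ^ k‖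
          ≤ ‖b n‖ + ‖a n * (lam n) ^ k‖ := by
            exact norm_sub_le (b n) _
        _ = ‖b n‖ + ‖a n‖ := by
            rw [norm_mul, norm_pow, hmod n, one_pow, mul_one]
        _ = ‖a n‖ + ‖b n‖ := by ring
    -- the perturbed vector
    set z : X := ∑ n ∈ S, ((a n - B n) • u n + B n • u (pm n)) with hz_def
    -- generic estimate
    have hsum : ∀ g : ℕ → ℂ, (∀ n ∈ S, ‖g n‖
        ≤ (‖a n‖ + ‖b n‖) / c2) →
        ‖∑ n ∈ S, g n • (u (pm n) - u n)‖ < ε := by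
      intro g hg
      have hb1 : ∀ n ∈ S, ‖g n • (u (pm n) - u n)‖
          ≤ (‖a n‖ + ‖b n‖) * (ε / (A + 1)) := by
        intro n hn
        rw [norm_smul]
        have h1 : ‖u (pm n) - u n‖ ≤ η n := by
          rw [norm_sub_rev]
          exact (hpm2 n).le
        have h2 : η n ≤ ε * c2 / (A + 1) := min_le_right _ _
        have h3 : ‖u (pm n) - u n‖ ≤ ε * c2 / (A + 1) := le_trans h1 h2
        calc ‖g n‖ * ‖u (pm n) - u n‖
            ≤ ((‖a n‖ + ‖b n‖) / c2) * (ε * c2 / (A + 1)) := by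
              refine mul_le_mul (hg n hn) h3 (norm_nonneg _) ?_
              positivity
          _ = (‖a n‖ + ‖b n‖) * (ε / (A + 1)) := by
              field_simp
      calc ‖∑ n ∈ S, g n • (u (pm n) - u n)‖
          ≤ ∑ n ∈ S, ‖g n • (u (pm n) - u n)‖ := norm_sum_le _ _
        _ ≤ ∑ n ∈ S, (‖a n‖ + ‖b n‖) * (ε / (A + 1)) :=
            Finset.sum_le_sum hb1
        _ = A * (ε / (A + 1)) := by
            rw [hA_def, ← Finset.sum_mul]
        _ < ε := by
            rw [mul_div_assoc']
            rw [div_lt_iff₀ (by positivity : (0:ℝ) < A + 1)]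
            nlinarith
    -- the two distances
    have hz1 : z - x = ∑ n ∈ S, B n • (u (pm n) - u n) := by
      rw [hz_def, hx_repr, ← Finset.sum_sub_distrib]
      refine Finset.sum_congr rfl fun n hn => ?_
      rw [sub_smul, smul_sub]
      abel
    have hco : ∀ n ∈ S, (a n - B n) * (lam n) ^ k + B n * (lam (pm n)) ^ k = b n := by
      intro n hn
      have h := hdenne n hn
      have h2 : B n * ((lam (pm n)) ^ k - (lam n) ^ k) = b n - a n * (lam n) ^ k := by
        rw [hB_def]
        exact div_mul_cancel₀ _ h
      linear_combination h2
    have hTz : (T ^ k) z - y = ∑ n ∈ S, (B n * (lam (pm n)) ^ k) • (u (pm n) - u n) := by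
      have e1 : (T ^ k) z = ∑ n ∈ S,
          (((a n - B n) * (lam n) ^ k) • u n + (B n * (lam (pm n)) ^ k) • u (pm n)) := by
        rw [hz_def, map_sum]
        refine Finset.sum_congr rfl fun n hn => ?_
        rw [map_add, ContinuousLinearMap.map_smul, ContinuousLinearMap.map_smul, hTpow, hTpow, smul_smul, smul_smul]
      rw [e1, hy_repr, ← Finset.sum_sub_distrib]
      refine Finset.sum_congr rfl fun n hn => ?_
      rw [← hco n hn, add_smul, smul_sub]
      abel
    refine ⟨z, k, ?_, ?_⟩
    · rw [hz1]
      exact hsum B hBle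
    · rw [hTz]
      refine hsum _ fun n hn => ?_
      rw [norm_mul, norm_pow, hmod (pm n), one_pow, mul_one]
      exact hBle n hn
  -- Baire category argument
  haveI : SecondCountableTopology X := UniformSpace.secondCountable_of_separable X
  obtain ⟨bset, hbc, hbne, hbasis⟩ := TopologicalSpace.exists_countable_basis X
  have hGopen : ∀ V : Set X, IsOpen V → IsOpen (⋃ k : ℕ, (T ^ k) ⁻¹' V) :=
    fun V hV => isOpen_iUnion fun k => hV.preimage (T ^ k).continuous
  have hGdense : ∀ V : Set X, IsOpen V → V.Nonempty → Dense (⋃ k : ℕ, (T ^ k) ⁻¹' V) := by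
    intro V hV hVne
    rw [Metric.dense_iff]
    intro x₀ r hr
    obtain ⟨v, hv⟩ := hVne
    obtain ⟨r₀, hr₀, hball⟩ := Metric.isOpen_iff.mp hV v hv
    obtain ⟨x, hxs, hxd⟩ := Metric.mem_closure_iff.mp (hspan x₀) (r / 2) (by positivity)
    obtain ⟨yy, hys, hyd⟩ := Metric.mem_closure_iff.mp (hspan v) (r₀ / 2) (by positivity)
    obtain ⟨z, k, hz1, hz2⟩ := key x hxs yy hys (min (r / 2) (r₀ / 2)) (by positivity)
    refine ⟨z, ?_, ?_⟩
    · rw [Metric.mem_ball]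
      have hzx : dist z x < r / 2 :=
        lt_of_lt_of_le (by rw [dist_eq_norm]; exact hz1) (min_le_left _ _)
      calc dist z x₀ ≤ dist z x + dist x x₀ := dist_triangle _ _ _
        _ < r / 2 + r / 2 := by
            have : dist x x₀ < r / 2 := by rw [dist_comm]; exact hxd
            linarith
        _ = r := by ring
    · refine Set.mem_iUnion.mpr ⟨k, ?_⟩
      have h1 : dist ((T ^ k) z) yy < r₀ / 2 :=
        lt_of_lt_of_le (by rw [dist_eq_norm]; exact hz2) (min_le_right _ _)
      have h2 : dist yy v < r₀ / 2 := by rw [dist_comm]; exact hyd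
      refine Set.mem_preimage.mpr (hball ?_)
      rw [Metric.mem_ball]
      calc dist ((T ^ k) z) v ≤ dist ((T ^ k) z) yy + dist yy v := dist_triangle _ _ _
        _ < r₀ / 2 + r₀ / 2 := by linarith
        _ = r₀ := by ring
  set bs : Set (Set X) := {V ∈ bset | V.Nonempty} with hbs_def
  have hcnt : ((fun V : Set X => ⋃ k : ℕ, (T ^ k) ⁻¹' V) '' bs).Countable :=
    (hbc.mono (Set.sep_subset _ _)).image _
  have hdense : Dense (⋂₀ ((fun V : Set X => ⋃ k : ℕ, (T ^ k) ⁻¹' V) '' bs)) := by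
    refine dense_sInter_of_isOpen ?_ hcnt ?_
    · rintro G ⟨V, hV, rfl⟩
      exact hGopen V (hbasis.isOpen hV.1)
    · rintro G ⟨V, hV, rfl⟩
      exact hGdense V (hbasis.isOpen hV.1) hV.2
  obtain ⟨f, hf⟩ := hdense.nonempty
  refine ⟨f, ?_⟩
  rw [hbasis.dense_iff]
  intro o ho hone
  have hfo : f ∈ ⋃ k : ℕ, (T ^ k) ⁻¹' o := hf _ (Set.mem_image_of_mem _ ⟨ho, hone⟩)
  obtain ⟨k, hk⟩ := Set.mem_iUnion.mp hfo
  exact ⟨(T ^ k) f, hk, ⟨k, rfl⟩⟩
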